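/- Let A be a local ring with maximal ideal m and commutative residue field k, and let p ∈ A[x] be a monic polynomial whose reduction p̄ ∈ k[x] is a power of an irreducible polynomial. Then the left A[x]-module A[x]/A[x]p is local, i.e. it has a unique maximal A[x]-submodule. -/

import Mathlib

open Polynomial

theorem rightDiv {R : Type*} [Ring R] [Nontrivial R] {q : R[X]} (hq : q.Monic) (p : R[X]) :
    ∃ c r : R[X], p = c * q + r ∧ r.degree < q.degree := by
  generalize hn : p.natDegree = n
  induction n using Nat.strong_induction_on generalizing p with
  | _ n ih =>
    by_cases hlt : p.degree < q.degree
    · exact ⟨0, p, by simp, hlt⟩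
    push_neg at hlt
    have hq0 : q ≠ 0 := hq.ne_zero
    have hp0 : p ≠ 0 := by
      rintro rfl
      simp only [degree_zero] at hlt
      exact hq0 (degree_eq_bot.mp (le_bot_iff.mp hlt))
    have hdle : q.natDegree ≤ p.natDegree := natDegree_le_natDegree hlt
    set a := p.leadingCoeff with ha
    have ha0 : a ≠ 0 := leadingCoeff_ne_zero.mpr hp0
    set k := p.natDegree - q.natDegree with hk
    have hq' : (X ^ k * q).Monic := (monic_X_pow k).mul hq
    have hq'd : (X ^ k * q).natDegree = p.natDegree := by
      rw [(monic_X_pow k).natDegree_mul hq, natDegree_X_pow]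
      omega
    set t := C a * (X ^ k * q) with ht
    have htc : t.coeff p.natDegree = a := by
      rw [ht, coeff_C_mul, ← hq'd, hq'.coeff_natDegree, mul_one]
    have htd : t.degree = p.degree := by
      apply le_antisymm
      · calc t.degree ≤ (C a).degree + (X ^ k * q).degree := degree_mul_le _ _
          _ ≤ 0 + (X ^ k * q).degree := add_le_add degree_C_le le_rfl
          _ = (X ^ k * q).degree := zero_add _
          _ = p.degree := by
              rw [degree_eq_natDegree hq'.ne_zero, hq'd, degree_eq_natDegree hp0]
      · rw [degree_eq_natDegree hp0]
        exact le_degree_of_ne_zero (by rw [htc]; exact ha0)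
    have htn : t.natDegree = p.natDegree := natDegree_eq_of_degree_eq htd
    have htlc : p.leadingCoeff = t.leadingCoeff := by
      show a = t.coeff t.natDegree
      rw [htn, htc]
    by_cases hpt : p - t = 0
    · refine ⟨C a * X ^ k, 0, ?_, ?_⟩
      · rw [add_zero, mul_assoc, ← ht, ← sub_eq_zero, hpt]
      · rw [degree_zero]
        exact (bot_lt_iff_ne_bot.mpr (fun h => hq0 (degree_eq_bot.mp h)))
    · have hdlt : (p - t).degree < p.degree := degree_sub_lt htd.symm hp0 htlc
      have hnlt : (p - t).natDegree < n := hn ▸ natDegree_lt_natDegree hpt hdlt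
      obtain ⟨c, r, hcr, hr⟩ := ih _ hnlt (p - t) rfl
      refine ⟨c + C a * X ^ k, r, ?_, hr⟩
      have h2 : p = t + (c * q + r) := by rw [← hcr]; abel
      calc p = t + (c * q + r) := h2
        _ = (c + C a * X ^ k) * q + r := by rw [add_mul, mul_assoc, ← ht]; abel


theorem nak {A : Type*} [Ring A] {K : Type*} [Field K] (π : A →+* K)
    (hπker : ∀ a : A, π a = 0 ↔ ¬ IsUnit a) {M : Type*} [AddCommGroup M] [Module A M] :
    ∀ (k : ℕ) (w : Fin k → M) (a : Fin k → Fin k → A),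
      (∀ i j, π (a i j) = 0) → (∀ i, w i = ∑ j, a i j • w j) → ∀ i, w i = 0 := by
  intro k
  induction k with
  | zero => exact fun w a _ _ i => absurd i.2 (by simp)
  | succ k ih =>
    intro w a ha hw
    set l : Fin (k + 1) := Fin.last k with hldef
    have hu : IsUnit (1 - a l l) := by
      by_contra h
      have h0 := (hπker _).mpr h
      rw [map_sub, map_one, ha, sub_zero] at h0
      exact one_ne_zero h0
    obtain ⟨u, hu'⟩ := hu
    have hl : w l = ∑ j : Fin k, ((↑u⁻¹ : A) * a l j.castSucc) • w j.castSucc := by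
      have h1 : (1 - a l l) • w l = ∑ j : Fin k, a l j.castSucc • w j.castSucc := by
        rw [sub_smul, one_smul, sub_eq_iff_eq_add]
        have := hw l
        rw [Fin.sum_univ_castSucc] at this
        exact this
      calc w l = ((↑u⁻¹ : A) * (1 - a l l)) • w l := by
            rw [← hu', u.inv_mul, one_smul]
        _ = (↑u⁻¹ : A) • ((1 - a l l) • w l) := by rw [mul_smul]
        _ = (↑u⁻¹ : A) • ∑ j : Fin k, a l j.castSucc • w j.castSucc := by rw [h1]
        _ = ∑ j : Fin k, ((↑u⁻¹ : A) * a l j.castSucc) • w j.castSucc := by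
            rw [Finset.smul_sum]
            exact Finset.sum_congr rfl fun j _ => (mul_smul _ _ _).symm
    set w' : Fin k → M := fun j => w j.castSucc with hw'def
    set a' : Fin k → Fin k → A := fun i j =>
      a i.castSucc j.castSucc + a i.castSucc l * ((↑u⁻¹ : A) * a l j.castSucc) with ha'def
    have ha' : ∀ i j, π (a' i j) = 0 := by
      intro i j
      simp only [ha'def, map_add, map_mul, ha, zero_mul, add_zero]
    have hw'' : ∀ i, w' i = ∑ j, a' i j • w' j := by
      intro i
      have h2 := hw i.castSucc
      rw [Fin.sum_univ_castSucc, hl, Finset.smul_sum] at h2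
      simp only [hw'def, ha'def]
      rw [h2, ← Finset.sum_add_distrib]
      refine Finset.sum_congr rfl fun j _ => ?_
      rw [add_smul, smul_smul]
    have hz := ih w' a' ha' hw''
    intro i
    induction i using Fin.lastCases with
    | last =>
      rw [hl]
      refine Finset.sum_eq_zero fun j _ => ?_
      rw [show w j.castSucc = w' j from rfl, hz j, smul_zero]
    | cast j => exact hz j

theorem key {A : Type*} [Ring A] {K : Type*} [Field K]
    (π : A →+* K) (hπsurj : Function.Surjective π)
    (hπker : ∀ a : A, π a = 0 ↔ ¬ IsUnit a)
    (p : A[X]) (hp : p.Monic) (g : K[X]) (n : ℕ) (hg : Irreducible g) (hn : 0 < n)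
    (hmap : p.map π = g ^ n)
    (I : Ideal A[X]) (hle : Ideal.span {p} ≤ I)
    (q : A[X]) (hqI : q ∈ I) (hq : ¬ g ∣ q.map π) : I = ⊤ := by
  have hA : Nontrivial A := π.domain_nontrivial
  have hco : IsCoprime (g ^ n) (q.map π) := ((hg.coprime_iff_not_dvd).mpr hq).pow_left
  obtain ⟨u, v, huv⟩ := hco
  obtain ⟨U, hU⟩ := Polynomial.map_surjective π hπsurj u
  obtain ⟨V, hV⟩ := Polynomial.map_surjective π hπsurj v
  set r' : A[X] := U * p + V * q with hr'def
  have hr'I : r' ∈ I := I.add_mem (I.mul_mem_left U (hle (Ideal.subset_span rfl)))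
    (I.mul_mem_left V hqI)
  have hfr' : r'.map π = 1 := by
    rw [hr'def, Polynomial.map_add, Polynomial.map_mul, Polynomial.map_mul, hU, hV, hmap, huv]
  set s : A[X] := r' - 1 with hsdef
  have hs : s.map π = 0 := by rw [hsdef, Polynomial.map_sub, hfr', Polynomial.map_one, sub_self]
  have h1s : 1 + s ∈ I := by
    have : 1 + s = r' := by rw [hsdef]; abel
    rw [this]; exact hr'I
  set d := p.natDegree with hddef
  have hgd : 0 < g.natDegree := hg.natDegree_pos
  have hd : 0 < d := by
    have : d = n * g.natDegree := by
      rw [hddef, ← hp.natDegree_map π, hmap, natDegree_pow]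
    rw [this]; exact Nat.mul_pos hn hgd
  have hdeg_p : p.degree = (d : WithBot ℕ) := degree_eq_natDegree hp.ne_zero
  -- choose right divisions of X^i * s by p
  choose c r hcr hrdeg using fun i : Fin d => rightDiv hp (X ^ (i : ℕ) * s)
  -- the matrix
  set a : Fin d → Fin d → A := fun i j => -((r i).coeff j) with hadef
  have hmapr : ∀ i, (r i).map π = 0 := by
    intro i
    have h0 : (c i).map π * p.map π + (r i).map π = 0 := by
      rw [← Polynomial.map_mul, ← Polynomial.map_add, ← hcr i, Polynomial.map_mul, hs, mul_zero]
    by_cases hc : (c i).map π = 0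
    · rwa [hc, zero_mul, zero_add] at h0
    · exfalso
      have heq : (r i).map π = -((c i).map π * p.map π) := eq_neg_of_add_eq_zero_right h0
      have h1 : p.degree ≤ ((c i).map π * p.map π).degree := by
        rw [degree_mul, hp.degree_map]
        exact le_add_of_nonneg_left (zero_le_degree_iff.mpr hc)
      have h2 : ((r i).map π).degree < p.degree :=
        lt_of_le_of_lt (degree_map_le) (hrdeg i)
      rw [heq, degree_neg] at h2
      exact absurd (lt_of_le_of_lt h1 h2) (lt_irrefl _)
  have ha : ∀ i j, π (a i j) = 0 := by
    intro i j
    have : ((r i).map π).coeff j = 0 := by rw [hmapr i, coeff_zero]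
    rw [coeff_map] at this
    rw [hadef]
    simp [this]
  -- the generators
  set w : Fin d → (A[X] ⧸ I) := fun j => Submodule.Quotient.mk (X ^ (j : ℕ)) with hwdef
  have hwrel : ∀ i, w i = ∑ j, a i j • w j := by
    intro i
    have hstep1 : (Submodule.Quotient.mk (X ^ (i : ℕ)) : A[X] ⧸ I)
        = -(Submodule.Quotient.mk (X ^ (i : ℕ) * s)) := by
      have hmem : X ^ (i : ℕ) * (1 + s) ∈ I := I.mul_mem_left _ h1s
      have : (Submodule.Quotient.mk (X ^ (i : ℕ) * (1 + s)) : A[X] ⧸ I) = 0 :=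
        (Submodule.Quotient.mk_eq_zero I).mpr hmem
      rw [mul_add, mul_one] at this
      rw [Submodule.Quotient.mk_add] at this
      exact eq_neg_of_add_eq_zero_left this
    have hstep2 : (Submodule.Quotient.mk (X ^ (i : ℕ) * s) : A[X] ⧸ I)
        = Submodule.Quotient.mk (r i) := by
      rw [Submodule.Quotient.eq]
      have : X ^ (i : ℕ) * s - r i = c i * p := by rw [hcr i]; abel
      rw [this]
      exact hle (Ideal.mem_span_singleton'.mpr ⟨c i, rfl⟩)
    have hrd : (r i).natDegree < d := by
      by_cases hr0 : r i = 0
      · rw [hr0, natDegree_zero]; exact hd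
      · exact natDegree_lt_natDegree hr0 (by rw [← hdeg_p] at *; exact hrdeg i)
    have hsum : r i = ∑ j ∈ Finset.range d, C ((r i).coeff j) * X ^ j := by
      conv_lhs => rw [(r i).as_sum_range' d hrd]
      exact Finset.sum_congr rfl fun j _ => (C_mul_X_pow_eq_monomial).symm
    have hstep3 : (Submodule.Quotient.mk (r i) : A[X] ⧸ I)
        = ∑ j : Fin d, ((r i).coeff j) • w j := by
      conv_lhs => rw [hsum]
      rw [show (Submodule.Quotient.mk (∑ j ∈ Finset.range d, C ((r i).coeff j) * X ^ j) : A[X] ⧸ I)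
        = I.mkQ (∑ j ∈ Finset.range d, C ((r i).coeff j) * X ^ j) from rfl]
      rw [map_sum, ← Fin.sum_univ_eq_sum_range (fun j => I.mkQ (C ((r i).coeff j) * X ^ j)) d]
      refine Finset.sum_congr rfl fun j _ => ?_
      rw [Submodule.mkQ_apply, ← smul_eq_C_mul, Submodule.Quotient.mk_smul]
    rw [hwdef]
    simp only []
    rw [hstep1, hstep2, hstep3, ← Finset.sum_neg_distrib]
    exact Finset.sum_congr rfl fun j _ => by rw [hadef]; simp [neg_smul, hwdef]
  have hz := nak π hπker d w a ha hwrel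
  have h1 : (1 : A[X]) ∈ I := by
    have := hz ⟨0, hd⟩
    rw [hwdef] at this
    simp only [pow_zero] at this
    exact (Submodule.Quotient.mk_eq_zero I).mp this
  exact (Ideal.eq_top_iff_one I).mpr h1

/-- Let `A` be a (possibly non-commutative) local ring with commutative residue field `K`,
encoded by a surjective ring homomorphism `π : A → K` onto a field whose kernel is exactly the
set of non-units of `A`.  Let `p ∈ A[x]` be a monic polynomial whose reduction `p̄ ∈ K[x]` is a
power of an irreducible polynomial.  Then the left `A[x]`-module `A[x]/A[x]p` is local, i.e. it
has a unique maximal `A[x]`-submodule (a unique coatom in its submodule lattice). -/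
theorem quotient_local_of_power_of_irreducible
    {A : Type*} [Ring A] {K : Type*} [Field K]
    (π : A →+* K) (hπsurj : Function.Surjective π)
    (hπker : ∀ a : A, π a = 0 ↔ ¬ IsUnit a)
    (p : A[X]) (hp : p.Monic)
    (hpow : ∃ (g : K[X]) (n : ℕ), Irreducible g ∧ 0 < n ∧ p.map π = g ^ n) :
    ∃! P : Submodule A[X] (A[X] ⧸ (Ideal.span {p} : Ideal A[X])), IsCoatom P := by
  obtain ⟨g, n, hg, hn, hmap⟩ := hpow
  set N : Ideal A[X] := Ideal.span {p} with hNdef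
  set J : Ideal A[X] := Ideal.comap (mapRingHom π) (Ideal.span {g}) with hJdef
  have hmemJ : ∀ q : A[X], q ∈ J ↔ g ∣ q.map π := by
    intro q
    rw [hJdef, Ideal.mem_comap, coe_mapRingHom, Ideal.mem_span_singleton]
  have hNJ : N ≤ J := by
    intro q hq
    obtain ⟨c, rfl⟩ := Ideal.mem_span_singleton'.mp hq
    rw [hmemJ, Polynomial.map_mul, hmap]
    exact Dvd.dvd.mul_left (dvd_pow_self g hn.ne') _
  have hJtop : J ≠ ⊤ := by
    intro h
    have : (1 : A[X]) ∈ J := h ▸ Submodule.mem_top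
    rw [hmemJ, Polynomial.map_one] at this
    exact hg.not_isUnit (isUnit_of_dvd_one this)
  have key' : ∀ I : Ideal A[X], N ≤ I → ¬ I ≤ J → I = ⊤ := by
    intro I hNI hIJ
    obtain ⟨q, hqI, hqJ⟩ := SetLike.not_le_iff_exists.mp hIJ
    rw [hmemJ] at hqJ
    exact key π hπsurj hπker p hp g n hg hn hmap I hNI q hqI hqJ
  set P₀ : Submodule A[X] (A[X] ⧸ N) := Submodule.map N.mkQ J with hP₀def
  have hcomapP₀ : Submodule.comap N.mkQ P₀ = J := by
    rw [hP₀def, Submodule.comap_map_mkQ, sup_eq_right.mpr hNJ]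
  have hmapcomap : ∀ Q : Submodule A[X] (A[X] ⧸ N), Submodule.map N.mkQ (Submodule.comap N.mkQ Q) = Q :=
    fun Q => Submodule.map_comap_eq_of_surjective (N.mkQ_surjective) Q
  have hkercomap : ∀ Q : Submodule A[X] (A[X] ⧸ N), N ≤ Submodule.comap N.mkQ Q := by
    intro Q x hx
    have : N.mkQ x = 0 := by
      rw [Submodule.mkQ_apply]
      exact (Submodule.Quotient.mk_eq_zero N).mpr hx
    rw [Submodule.mem_comap, this]
    exact Q.zero_mem
  refine ⟨P₀, ⟨?_, ?_⟩, ?_⟩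
  · -- P₀ ≠ ⊤
    intro h
    apply hJtop
    rw [← hcomapP₀, h, Submodule.comap_top]
  · -- maximality
    intro Q hQ
    set I := Submodule.comap N.mkQ Q with hIdef
    have hJI : J ≤ I := by
      rw [← hcomapP₀]
      exact Submodule.comap_mono hQ.le
    have hne : I ≠ J := by
      intro h
      have : Q = P₀ := by rw [← hmapcomap Q, ← hIdef, h, hP₀def]
      exact absurd this (ne_of_gt hQ)
    have hIJ : ¬ I ≤ J := fun h => hne (le_antisymm h hJI)
    have : I = ⊤ := key' I (hkercomap Q) hIJ
    rw [← hmapcomap Q, ← hIdef, this, Submodule.map_top, Submodule.range_mkQ]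
  · -- uniqueness
    intro Q hQ
    set I := Submodule.comap N.mkQ Q with hIdef
    have hItop : I ≠ ⊤ := by
      intro h
      apply hQ.1
      rw [← hmapcomap Q, ← hIdef, h, Submodule.map_top, Submodule.range_mkQ]
    have hIJ : I ≤ J := by
      by_contra h
      exact hItop (key' I (hkercomap Q) h)
    have hQP : Q ≤ P₀ := by
      rw [← hmapcomap Q, ← hIdef, hP₀def]
      exact Submodule.map_mono hIJ
    rcases eq_or_lt_of_le hQP with h | h
    · exact h
    · exact absurd (hQ.2 P₀ h) (by
        intro htop
        apply hJtop
        rw [← hcomapP₀, htop, Submodule.comap_top])
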